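/- For points on a line, the optimal 2-means partition is an interval split: there exists an optimal partition of the sorted points into a prefix and a suffix. -/

import Mathlib

open Finset

/-- Inertia (within-cluster sum of squared deviations from the mean) of a cluster of
indices for points `x : Fin n → ℝ`. -/
noncomputable def clusterInertia {n : ℕ} (x : Fin n → ℝ) (A : Finset (Fin n)) : ℝ :=
  ∑ i ∈ A, (x i - (A.card : ℝ)⁻¹ * ∑ j ∈ A, x j) ^ 2

noncomputable def cmean {n : ℕ} (x : Fin n → ℝ) (A : Finset (Fin n)) : ℝ :=
  (A.card : ℝ)⁻¹ * ∑ j ∈ A, x j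

lemma sum_eq_card_mul_cmean {n : ℕ} (x : Fin n → ℝ) (A : Finset (Fin n)) (hA : A.Nonempty) :
    ∑ j ∈ A, x j = (A.card : ℝ) * cmean x A := by
  have hc : (A.card : ℝ) ≠ 0 := by
    exact_mod_cast (Finset.card_pos.mpr hA).ne'
  rw [cmean, ← mul_assoc, mul_inv_cancel₀ hc, one_mul]

lemma cmean_sub_sum {n : ℕ} (x : Fin n → ℝ) (A : Finset (Fin n)) (hA : A.Nonempty) :
    ∑ i ∈ A, (x i - cmean x A) = 0 := by
  rw [Finset.sum_sub_distrib, Finset.sum_const, sum_eq_card_mul_cmean x A hA]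
  simp [mul_comm]

lemma inertia_le {n : ℕ} (x : Fin n → ℝ) (A : Finset (Fin n)) (c : ℝ) :
    clusterInertia x A ≤ ∑ i ∈ A, (x i - c) ^ 2 := by
  rcases A.eq_empty_or_nonempty with rfl | hA
  · simp [clusterInertia]
  set μ := cmean x A with hμ
  have h0 := cmean_sub_sum x A hA
  have hexp : ∑ i ∈ A, (x i - c) ^ 2
      = ∑ i ∈ A, ((x i - μ) ^ 2 + 2 * (μ - c) * (x i - μ) + (μ - c) ^ 2) := by
    apply Finset.sum_congr rfl; intro i _; ring
  rw [hexp, Finset.sum_add_distrib, Finset.sum_add_distrib, ← Finset.mul_sum, h0,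
    Finset.sum_const]
  have h1 : (0:ℝ) ≤ A.card • (μ - c) ^ 2 := by positivity
  have : clusterInertia x A = ∑ i ∈ A, (x i - μ) ^ 2 := rfl
  linarith

lemma exists_le_cmean {n : ℕ} (x : Fin n → ℝ) (A : Finset (Fin n)) (hA : A.Nonempty) :
    ∃ i ∈ A, x i ≤ cmean x A := by
  apply Finset.exists_le_of_sum_le hA
  rw [Finset.sum_const, sum_eq_card_mul_cmean x A hA, nsmul_eq_mul]

lemma exists_cmean_le {n : ℕ} (x : Fin n → ℝ) (A : Finset (Fin n)) (hA : A.Nonempty) :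
    ∃ i ∈ A, cmean x A ≤ x i := by
  apply Finset.exists_le_of_sum_le hA
  rw [Finset.sum_const, sum_eq_card_mul_cmean x A hA, nsmul_eq_mul]

lemma key_lemma {n : ℕ} (hn : 2 ≤ n) (x : Fin n → ℝ) (hsorted : Monotone x)
    (B : Finset (Fin n)) (hB : B.Nonempty) (hBc : Bᶜ.Nonempty)
    (hμ : cmean x B ≤ cmean x Bᶜ) :
    ∃ m : Fin n, (Finset.univ.filter (fun i => i ≤ m))ᶜ.Nonempty ∧
      clusterInertia x (Finset.univ.filter (fun i => i ≤ m)) +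
        clusterInertia x (Finset.univ.filter (fun i => i ≤ m))ᶜ ≤
      clusterInertia x B + clusterInertia x Bᶜ := by
  classical
  set b := cmean x B with hb
  set c := cmean x Bᶜ with hc
  have hfB : clusterInertia x B = ∑ i ∈ B, (x i - b) ^ 2 := rfl
  have hfBc : clusterInertia x Bᶜ = ∑ i ∈ Bᶜ, (x i - c) ^ 2 := rfl
  rcases eq_or_lt_of_le hμ with heq | hlt
  · -- equal means: take m = 0
    refine ⟨⟨0, by omega⟩, ?_, ?_⟩
    · exact ⟨⟨1, by omega⟩, by simp [Fin.le_def]⟩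
    · set P := Finset.univ.filter (fun i => i ≤ (⟨0, by omega⟩ : Fin n)) with hP
      have hPs : P = {(⟨0, by omega⟩ : Fin n)} := by
        ext i
        simp only [hP, Finset.mem_filter, Finset.mem_univ, true_and, Finset.mem_singleton,
          Fin.le_def, Fin.ext_iff]
        omega
      have h1 : clusterInertia x P = 0 := by
        rw [hPs]; simp [clusterInertia]
      have h2 : clusterInertia x Pᶜ ≤ ∑ i ∈ Pᶜ, (x i - b) ^ 2 := inertia_le x _ b
      have h3 : (0:ℝ) ≤ ∑ i ∈ P, (x i - b) ^ 2 := by positivity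
      have h4 : ∑ i ∈ P, (x i - b) ^ 2 + ∑ i ∈ Pᶜ, (x i - b) ^ 2
          = ∑ i ∈ B, (x i - b) ^ 2 + ∑ i ∈ Bᶜ, (x i - b) ^ 2 := by
        rw [Finset.sum_add_sum_compl, Finset.sum_add_sum_compl]
      rw [hfB, hfBc, ← heq, h1]
      linarith
  · -- distinct means
    set t := (b + c) / 2 with ht
    set A := Finset.univ.filter (fun i => x i ≤ t) with hAdef
    obtain ⟨i0, hi0B, hi0⟩ := exists_le_cmean x B hB
    obtain ⟨j0, hj0B, hj0⟩ := exists_cmean_le x Bᶜ hBc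
    have hA : A.Nonempty := by
      refine ⟨i0, ?_⟩
      simp only [hAdef, Finset.mem_filter, Finset.mem_univ, true_and]
      linarith
    have hj0A : j0 ∉ A := by
      simp only [hAdef, Finset.mem_filter, Finset.mem_univ, true_and, not_le]
      linarith
    set m := A.max' hA with hm
    have hxm : x m ≤ t := by
      have := A.max'_mem hA
      simpa [hAdef] using this
    have hPA : Finset.univ.filter (fun i => i ≤ m) = A := by
      ext i
      simp only [Finset.mem_filter, Finset.mem_univ, true_and, hAdef]
      constructor
      · intro hi; exact le_trans (hsorted hi) hxm
      · intro hi; exact A.le_max' i (by simpa [hAdef] using hi)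
    refine ⟨m, ?_, ?_⟩
    · exact ⟨j0, by rw [Finset.mem_compl, hPA]; exact hj0A⟩
    · rw [hPA, hfB, hfBc]
      have h2 : clusterInertia x A ≤ ∑ i ∈ A, (x i - b) ^ 2 := inertia_le x _ b
      have h3 : clusterInertia x Aᶜ ≤ ∑ i ∈ Aᶜ, (x i - c) ^ 2 := inertia_le x _ c
      have hmid : ∑ i ∈ A, (x i - b) ^ 2 + ∑ i ∈ Aᶜ, (x i - c) ^ 2
          ≤ ∑ i ∈ B, (x i - b) ^ 2 + ∑ i ∈ Bᶜ, (x i - c) ^ 2 := by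
        have hL : ∑ i ∈ A, (x i - b) ^ 2 + ∑ i ∈ Aᶜ, (x i - c) ^ 2
            = ∑ i : Fin n, (if x i ≤ t then (x i - b) ^ 2 else (x i - c) ^ 2) := by
          rw [← Finset.sum_add_sum_compl A]
          congr 1
          · apply Finset.sum_congr rfl; intro i hi
            simp only [hAdef, Finset.mem_filter, Finset.mem_univ, true_and] at hi
            rw [if_pos hi]
          · apply Finset.sum_congr rfl; intro i hi
            rw [Finset.mem_compl] at hi
            simp only [hAdef, Finset.mem_filter, Finset.mem_univ, true_and] at hi
            rw [if_neg hi]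
        have hR : ∑ i ∈ B, (x i - b) ^ 2 + ∑ i ∈ Bᶜ, (x i - c) ^ 2
            = ∑ i : Fin n, (if i ∈ B then (x i - b) ^ 2 else (x i - c) ^ 2) := by
          rw [← Finset.sum_add_sum_compl B]
          congr 1
          · apply Finset.sum_congr rfl; intro i hi; rw [if_pos hi]
          · apply Finset.sum_congr rfl; intro i hi
            rw [Finset.mem_compl] at hi; rw [if_neg hi]
        rw [hL, hR]
        apply Finset.sum_le_sum
        intro i _
        by_cases h1 : x i ≤ t
        · rw [if_pos h1]
          by_cases h2 : i ∈ B
          · rw [if_pos h2]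
          · rw [if_neg h2]; nlinarith
        · rw [if_neg h1]
          push_neg at h1
          by_cases h2 : i ∈ B
          · rw [if_pos h2]; nlinarith
          · rw [if_neg h2]
      linarith

/-- for sorted points on a line, among partitions into two nonempty
clusters minimizing the total inertia, there is one which is an interval split: a
prefix `{i : i ≤ m}` and the complementary suffix. -/
theorem one_dim_two_means_interval_split
    (n : ℕ) (hn : 2 ≤ n) (x : Fin n → ℝ) (hsorted : Monotone x) :
    ∃ m : Fin n,
      (Finset.univ.filter (fun i => i ≤ m)).Nonempty ∧
      (Finset.univ.filter (fun i => i ≤ m))ᶜ.Nonempty ∧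
      ∀ B : Finset (Fin n), B.Nonempty → Bᶜ.Nonempty →
        clusterInertia x (Finset.univ.filter (fun i => i ≤ m)) +
          clusterInertia x (Finset.univ.filter (fun i => i ≤ m))ᶜ ≤
        clusterInertia x B + clusterInertia x Bᶜ := by
  classical
  set g : Fin n → ℝ := fun m => clusterInertia x (Finset.univ.filter (fun i => i ≤ m)) +
      clusterInertia x (Finset.univ.filter (fun i => i ≤ m))ᶜ with hg
  set T : Finset (Fin n) :=
    Finset.univ.filter (fun m => ((Finset.univ.filter (fun i => i ≤ m))ᶜ).Nonempty) with hT
  have hT0 : T.Nonempty := by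
    refine ⟨⟨0, by omega⟩, ?_⟩
    simp only [hT, Finset.mem_filter, Finset.mem_univ, true_and]
    exact ⟨⟨1, by omega⟩, by simp [Fin.le_def]⟩
  obtain ⟨m, hmT, hmin⟩ := T.exists_min_image g hT0
  have hmTc : ((Finset.univ.filter (fun i => i ≤ m))ᶜ).Nonempty := by
    simpa [hT] using hmT
  refine ⟨m, ⟨m, by simp⟩, hmTc, ?_⟩
  intro B hB hBc
  rcases le_total (cmean x B) (cmean x Bᶜ) with h | h
  · obtain ⟨m', hm', hle⟩ := key_lemma hn x hsorted B hB hBc h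
    have : g m ≤ g m' := hmin m' (by rw [hT]; exact Finset.mem_filter.mpr ⟨Finset.mem_univ _, hm'⟩)
    calc g m ≤ g m' := this
      _ ≤ _ := hle
  · obtain ⟨m', hm', hle⟩ := key_lemma hn x hsorted Bᶜ hBc (by rwa [compl_compl])
      (by rwa [compl_compl])
    rw [compl_compl] at hle
    have : g m ≤ g m' := hmin m' (by rw [hT]; exact Finset.mem_filter.mpr ⟨Finset.mem_univ _, hm'⟩)
    calc g m ≤ g m' := this
      _ ≤ clusterInertia x Bᶜ + clusterInertia x B := hle
      _ = _ := add_comm _ _
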